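/- Every bipartite multigraph G can be edge-decomposed into k spanning subgraphs G_1, …, G_k such that for each vertex v and each i, |d_{G_i}(v) − d_G(v)/k| < 1, i.e., ⌊d_G(v)/k⌋ ≤ d_{G_i}(v) ≤ ⌈d_G(v)/k⌉. -/

import Mathlib

open Finset

variable {V E : Type*}

/-- Degree of `v` in the sub-multigraph given by the edge set `S`,
where `ends e` gives the two endpoints of edge `e` (loops count twice). -/
def mdeg [DecidableEq V] (ends : E → V × V) (S : Finset E) (v : V) : ℕ :=
  (S.filter fun e => (ends e).1 = v).card + (S.filter fun e => (ends e).2 = v).card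

/-- Number of edges with exactly one end in the vertex set `X`. -/
def cutCard [Fintype E] [DecidableEq V] (ends : E → V × V) (X : Finset V) : ℕ :=
  (univ.filter fun e : E =>
    ((ends e).1 ∈ X ∧ (ends e).2 ∉ X) ∨ ((ends e).1 ∉ X ∧ (ends e).2 ∈ X)).card

/-- `lam`-edge-connectedness: every edge cut has at least `lam` edges. -/
def EdgeConn [Fintype V] [Fintype E] [DecidableEq V] (ends : E → V × V) (lam : ℕ) : Prop :=
  ∀ X : Finset V, X.Nonempty → X ≠ univ → lam ≤ cutCard ends X

/-! ### Auxiliary machinery -/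

section Rank

variable {α : Type*} [LinearOrder α]

/-- Rank of `e` in the finite set `s`: the number of elements of `s` below `e`. -/
def rnk (s : Finset α) (e : α) : ℕ := (s.filter fun x => x < e).card

lemma rnk_lt {s : Finset α} {e : α} (he : e ∈ s) : rnk s e < s.card := by
  refine Finset.card_lt_card ?_
  rw [Finset.ssubset_iff_of_subset (filter_subset _ s)]
  exact ⟨e, he, by simp⟩

lemma fin_range_filter {n : ℕ} (P : ℕ → Prop) [DecidablePred P] :
    ((univ : Finset (Fin n)).filter fun j => P j.val).card = ((range n).filter P).card := by
  have h : ((range n).filter P) = ((univ : Finset (Fin n)).filter fun j => P j.val).image Fin.val := by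
    ext r
    simp only [mem_filter, mem_range, mem_image, mem_univ, true_and]
    constructor
    · rintro ⟨hr, hP⟩; exact ⟨⟨r, hr⟩, hP, rfl⟩
    · rintro ⟨j, hP, rfl⟩; exact ⟨j.2, hP⟩
  rw [h, Finset.card_image_of_injective _ Fin.val_injective]

lemma rnk_count (s : Finset α) (P : ℕ → Prop) [DecidablePred P] :
    (s.filter fun e => P (rnk s e)).card = ((range s.card).filter P).card := by
  classical
  set σ := s.orderIsoOfFin rfl with hσ
  have hcoeinj : Function.Injective (fun j : Fin s.card => (σ j : α)) := fun x y h =>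
    σ.injective (Subtype.coe_injective h)
  have hr : ∀ i : Fin s.card, rnk s (σ i : α) = (i : ℕ) := by
    intro i
    have himg : s.filter (fun x => x < (σ i : α))
        = (univ.filter fun j : Fin s.card => j < i).image fun j => (σ j : α) := by
      ext x
      simp only [mem_filter, mem_image, mem_univ, true_and]
      constructor
      · rintro ⟨hxs, hlt⟩
        refine ⟨σ.symm ⟨x, hxs⟩, ?_, by simp⟩
        rw [← σ.lt_iff_lt]
        simpa using (Subtype.coe_lt_coe (x := (⟨x, hxs⟩ : {y // y ∈ s})) (y := σ i)).mp hlt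
      · rintro ⟨j, hj, rfl⟩
        exact ⟨(σ j).2, by exact_mod_cast Subtype.coe_lt_coe.mpr (σ.lt_iff_lt.mpr hj)⟩
    have hIio : (univ.filter fun j : Fin s.card => j < i) = Finset.Iio i := by
      ext j; simp
    rw [rnk, himg, Finset.card_image_of_injective _ hcoeinj, hIio, Fin.card_Iio]
  have himg2 : s.filter (fun e => P (rnk s e))
      = (univ.filter fun j : Fin s.card => P (j : ℕ)).image fun j => (σ j : α) := by
    ext x
    simp only [mem_filter, mem_image, mem_univ, true_and]
    constructor
    · rintro ⟨hxs, hP⟩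
      refine ⟨σ.symm ⟨x, hxs⟩, ?_, by simp⟩
      have hcoe : ((σ (σ.symm ⟨x, hxs⟩)) : α) = x := by simp
      have key := hr (σ.symm ⟨x, hxs⟩)
      rw [hcoe] at key
      rw [← key]; exact hP
    · rintro ⟨j, hP, rfl⟩
      exact ⟨(σ j).2, by rw [hr]; exact hP⟩
  rw [himg2, Finset.card_image_of_injective _ hcoeinj, fin_range_filter]

end Rank

section Blocks

variable {E V : Type*} [Fintype E] [LinearOrder E] [DecidableEq V]

/-- Block index of an edge `e`: rank of `e` within its `p`-fiber, divided by `k`. -/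
def blkIdx (p : E → V) (k : ℕ) (e : E) : ℕ :=
  rnk (univ.filter fun e' => p e' = p e) e / k

lemma blkIdx_le_cardE (p : E → V) (k : ℕ) (e : E) : blkIdx p k e ≤ Fintype.card E := by
  have h1 : rnk (univ.filter fun e' => p e' = p e) e < (univ.filter fun e' => p e' = p e).card :=
    rnk_lt (by simp)
  have h2 : (univ.filter fun e' => p e' = p e).card ≤ Fintype.card E := by
    simpa using Finset.card_filter_le univ _
  exact le_trans (Nat.div_le_self _ _) (le_trans h1.le h2)

lemma range_filter_div (d k j : ℕ) (hk : 0 < k) :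
    ((range d).filter fun r => r / k = j) = Finset.Ico (j * k) (min (j * k + k) d) := by
  ext r
  simp only [mem_filter, mem_range, Finset.mem_Ico, lt_min_iff]
  constructor
  · rintro ⟨hrd, rfl⟩
    have hmod : r % k < k := Nat.mod_lt r hk
    have hdm : r / k * k + r % k = r := Nat.div_add_mod' r k
    refine ⟨Nat.div_mul_le_self r k, ?_, hrd⟩
    linarith
  · rintro ⟨h1, h2, h3⟩
    refine ⟨h3, Nat.div_eq_of_lt_le h1 ?_⟩
    rw [Nat.succ_mul]; exact h2

/-- Cardinality of the `j`-th block of a fiber. -/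
lemma blk_fiber_card {p : E → V} {k : ℕ} (hk : 0 < k) {v : V} (j : ℕ) :
    ((univ.filter fun e => p e = v).filter fun e => blkIdx p k e = j).card
      = min (j * k + k) (univ.filter fun e => p e = v).card - j * k := by
  set s := univ.filter fun e => p e = v with hs
  have hblk : ∀ e ∈ s, blkIdx p k e = rnk s e / k := by
    intro e he
    have hpe : p e = v := (mem_filter.mp he).2
    rw [blkIdx, hpe, ← hs]
  rw [Finset.filter_congr (fun e he => by rw [hblk e he])]
  rw [rnk_count s (fun r => r / k = j), range_filter_div _ _ _ hk, Nat.card_Ico]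

lemma blk_fiber_card_le {p : E → V} {k : ℕ} (hk : 0 < k) {v : V} (j : ℕ) :
    ((univ.filter fun e => p e = v).filter fun e => blkIdx p k e = j).card ≤ k := by
  rw [blk_fiber_card hk j]
  calc min (j * k + k) (univ.filter fun e => p e = v).card - j * k
      ≤ (j * k + k) - j * k := Nat.sub_le_sub_right (min_le_left _ _) _
    _ = k := by rw [Nat.add_sub_cancel_left]

lemma blk_fiber_card_eq {p : E → V} {k : ℕ} (hk : 0 < k) {v : V} {j : ℕ}
    (hj : j < (univ.filter fun e => p e = v).card / k) :
    ((univ.filter fun e => p e = v).filter fun e => blkIdx p k e = j).card = k := by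
  set d := (univ.filter fun e => p e = v).card with hd
  have hjk : j * k + k ≤ d := by
    have h1 : (j + 1) * k ≤ (d / k) * k := Nat.mul_le_mul_right k (by omega)
    have h2 : (d / k) * k ≤ d := Nat.div_mul_le_self d k
    calc j * k + k = (j + 1) * k := by rw [Nat.succ_mul]
      _ ≤ d := le_trans h1 h2
  rw [blk_fiber_card hk j, ← hd, min_eq_left hjk, Nat.add_sub_cancel_left]

end Blocks

section Proper

variable {E W : Type*}

/-- `c` is a proper coloring w.r.t. the endpoint map `p`. -/
def IsProp (p : E → W) {k : ℕ} (c : E → Fin k) : Prop :=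
  ∀ e e', p e = p e' → c e = c e' → e = e'

/-- Removing from `E` the range of a section `m` of `p` drops each fiber cardinality by one. -/
lemma sub_fiber_card [Fintype E] [DecidableEq E] [Fintype W] [DecidableEq W]
    (p : E → W) (m : W → E) (q : E → Prop) [DecidablePred q]
    (hq : ∀ e, q e ↔ ∀ w, m w ≠ e)
    (hpm : ∀ w, p (m w) = w) (w : W) :
    ((univ : Finset {e : E // q e}).filter fun e' => p e'.1 = w).card + 1
      = ((univ : Finset E).filter fun e => p e = w).card := by
  classical
  have h1 : ((univ : Finset {e : E // q e}).filter fun e' => p e'.1 = w).card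
      = ((univ : Finset E).filter fun e => q e ∧ p e = w).card := by
    rw [← Fintype.card_subtype, ← Fintype.card_subtype]
    exact Fintype.card_congr (Equiv.subtypeSubtypeEquivSubtypeInter q (fun e => p e = w))
  have h2 : ((univ : Finset E).filter fun e => p e = w).filter (fun e => ¬ q e) = {m w} := by
    ext e
    simp only [mem_filter, mem_univ, true_and, Finset.mem_singleton, hq]
    constructor
    · rintro ⟨hpe, hne⟩
      push_neg at hne
      obtain ⟨w', hw'⟩ := hne
      have : w' = w := by rw [← hpm w', hw', hpe]
      rw [← hw', this]
    · rintro rfl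
      exact ⟨hpm w, fun h => h w rfl⟩
  have h3 := Finset.card_filter_add_card_filter_not
    (s := (univ : Finset E).filter fun e => p e = w) (p := q)
  rw [h2] at h3
  have h4 : (((univ : Finset E).filter fun e => p e = w).filter q)
      = (univ : Finset E).filter fun e => q e ∧ p e = w := by
    rw [Finset.filter_filter]
    exact Finset.filter_congr (fun e _ => by tauto)
  rw [h4] at h3
  rw [h1]
  simpa using h3

end Proper

section KeyReg

/-- A `k`-regular "bipartite" multigraph (encoded by endpoint maps `a b : E → W`)
has a proper `k`-edge-coloring. -/
lemma keyReg {W : Type v} [Fintype W] [DecidableEq W] (k : ℕ) :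
    ∀ {E : Type u} [Fintype E] [DecidableEq E] (a b : E → W),
    (∀ w, (univ.filter fun e => a e = w).card = k) →
    (∀ w, (univ.filter fun e => b e = w).card = k) →
    ∃ c : E → Fin k, IsProp a c ∧ IsProp b c := by
  induction k with
  | zero =>
    intro E _ _ a b ha _
    have hE : IsEmpty E := by
      by_contra h
      rw [not_isEmpty_iff] at h
      obtain ⟨e⟩ := h
      have : e ∈ univ.filter fun e' => a e' = a e := by simp
      have hc := ha (a e)
      rw [Finset.card_eq_zero] at hc
      simp [hc] at this
    exact ⟨fun e => (hE.false e).elim, fun e => (hE.false e).elim, fun e => (hE.false e).elim⟩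
  | succ k ih =>
    intro E _ _ a b ha hb
    classical
    -- Hall's condition for the neighborhood system
    set t : W → Finset W := fun w => (univ.filter fun e => a e = w).image b with ht
    have hall : ∀ s : Finset W, s.card ≤ (s.biUnion t).card := by
      intro s
      have hcardA : (univ.filter fun e : E => a e ∈ s).card = (k + 1) * s.card := by
        rw [Finset.card_eq_sum_card_fiberwise (f := a) (s := univ.filter fun e : E => a e ∈ s) (t := s)
          (fun e he => (mem_filter.mp he).2)]
        rw [Finset.sum_congr rfl (fun w hw => ?_)]
        · rw [Finset.sum_const, smul_eq_mul, mul_comm]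
        · have : ((univ.filter fun e : E => a e ∈ s).filter fun e => a e = w)
              = univ.filter fun e => a e = w := by
            ext e; simp only [mem_filter, mem_univ, true_and]
            constructor
            · tauto
            · intro h; exact ⟨h ▸ hw, h⟩
          rw [this, ha w]
      have hsub : (univ.filter fun e : E => a e ∈ s)
          ⊆ univ.filter fun e : E => b e ∈ s.biUnion t := by
        intro e he
        simp only [mem_filter, mem_univ, true_and] at he ⊢
        rw [Finset.mem_biUnion]
        exact ⟨a e, he, by rw [ht]; exact Finset.mem_image.mpr ⟨e, by simp, rfl⟩⟩
      have hcardB : (univ.filter fun e : E => b e ∈ s.biUnion t).card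
          = (k + 1) * (s.biUnion t).card := by
        rw [Finset.card_eq_sum_card_fiberwise (f := b) (s := univ.filter fun e : E => b e ∈ s.biUnion t) (t := s.biUnion t)
          (fun e he => (mem_filter.mp he).2)]
        rw [Finset.sum_congr rfl (fun w hw => ?_)]
        · rw [Finset.sum_const, smul_eq_mul, mul_comm]
        · have : ((univ.filter fun e : E => b e ∈ s.biUnion t).filter fun e => b e = w)
              = univ.filter fun e => b e = w := by
            ext e; simp only [mem_filter, mem_univ, true_and]
            constructor
            · tauto
            · intro h; exact ⟨h ▸ hw, h⟩
          rw [this, hb w]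
      have := Finset.card_le_card hsub
      rw [hcardA, hcardB] at this
      exact Nat.le_of_mul_le_mul_left (by linarith) (Nat.succ_pos k)
    obtain ⟨f, hfinj, hft⟩ := (Finset.all_card_le_biUnion_card_iff_exists_injective t).mp hall
    -- f is bijective
    have hfbij : Function.Bijective f :=
      ⟨hfinj, Finite.surjective_of_injective hfinj⟩
    set φ : W ≃ W := Equiv.ofBijective f hfbij with hφ
    -- choose matching edges
    have hmex : ∀ w, ∃ e : E, (a e = w) ∧ b e = f w := by
      intro w
      obtain ⟨e, he, hbe⟩ := Finset.mem_image.mp (hft w)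
      exact ⟨e, (mem_filter.mp he).2, hbe⟩
    choose m ham hbm using hmex
    -- the reduced edge set
    set q : E → Prop := fun e => ∀ w, m w ≠ e with hqdef
    have hA' : ∀ w, ((univ : Finset {e : E // q e}).filter fun e' => a e'.1 = w).card = k := by
      intro w
      have := sub_fiber_card a m q (fun e => Iff.rfl) ham w
      rw [ha w] at this
      omega
    have hB' : ∀ w, ((univ : Finset {e : E // q e}).filter fun e' => b e'.1 = w).card = k := by
      intro w
      have hq2 : ∀ e, q e ↔ ∀ w, (fun w => m (φ.symm w)) w ≠ e := by
        intro e
        constructor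
        · intro H w'; exact H (φ.symm w')
        · intro H w'
          have : m (φ.symm (φ w')) ≠ e := H (φ w')
          simpa using this
      have hpm : ∀ w, b (m (φ.symm w)) = w := by
        intro w
        rw [hbm (φ.symm w)]
        exact φ.apply_symm_apply w
      have := sub_fiber_card b (fun w => m (φ.symm w)) q hq2 hpm w
      rw [hb w] at this
      omega
    obtain ⟨c', hc'a, hc'b⟩ := ih (fun e' : {e : E // q e} => a e'.1) (fun e' => b e'.1) hA' hB'
    refine ⟨fun e => if h : q e then (c' ⟨e, h⟩).castSucc else Fin.last k, ?_, ?_⟩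
    · intro e e' hae hce
      by_cases h : q e <;> by_cases h' : q e'
      · simp only [dif_pos h, dif_pos h'] at hce
        have := hc'a ⟨e, h⟩ ⟨e', h'⟩ hae (Fin.castSucc_injective k hce)
        exact congrArg Subtype.val this
      · simp only [dif_pos h, dif_neg h'] at hce
        exact absurd hce (Fin.castSucc_lt_last _).ne
      · simp only [dif_neg h, dif_pos h'] at hce
        exact absurd hce.symm (Fin.castSucc_lt_last _).ne
      · simp only [hqdef, not_forall, not_not] at h h'
        obtain ⟨w, rfl⟩ := h
        obtain ⟨w', rfl⟩ := h'
        rw [ham w, ham w'] at hae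
        rw [hae]
    · intro e e' hbe hce
      by_cases h : q e <;> by_cases h' : q e'
      · simp only [dif_pos h, dif_pos h'] at hce
        have := hc'b ⟨e, h⟩ ⟨e', h'⟩ hbe (Fin.castSucc_injective k hce)
        exact congrArg Subtype.val this
      · simp only [dif_pos h, dif_neg h'] at hce
        exact absurd hce (Fin.castSucc_lt_last _).ne
      · simp only [dif_neg h, dif_pos h'] at hce
        exact absurd hce.symm (Fin.castSucc_lt_last _).ne
      · simp only [hqdef, not_forall, not_not] at h h'
        obtain ⟨w, rfl⟩ := h
        obtain ⟨w', rfl⟩ := h'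
        rw [hbm w, hbm w'] at hbe
        rw [hfinj hbe]

end KeyReg

section KeyK

/-- Realizing a prescribed fiber-cardinality function on `Fin N`. -/
lemma exists_fiber_fun {W : Type*} [Fintype W] [DecidableEq W] (d : W → ℕ) (N : ℕ)
    (h : ∑ w, d w = N) : ∃ f : Fin N → W, ∀ w, (univ.filter fun i => f i = w).card = d w := by
  classical
  have hcard : Fintype.card (Σ w : W, Fin (d w)) = N := by
    simp [Fintype.card_sigma, h]
  set e := Fintype.equivFinOfCardEq hcard with he
  refine ⟨fun i => (e.symm i).1, fun w => ?_⟩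
  rw [← Fintype.card_subtype]
  have e1 : {i : Fin N // (e.symm i).1 = w} ≃ {t : Σ w : W, Fin (d w) // t.1 = w} :=
    (Equiv.subtypeEquiv e.symm (fun i => Iff.rfl))
  have e2 : {t : Σ w : W, Fin (d w) // t.1 = w} ≃ Fin (d w) :=
    { toFun := fun t => t.2 ▸ t.1.2
      invFun := fun x => ⟨⟨w, x⟩, rfl⟩
      left_inv := by rintro ⟨⟨x, b⟩, rfl⟩; rfl
      right_inv := fun x => rfl }
  rw [Fintype.card_congr (e1.trans e2), Fintype.card_fin]

lemma sum_type_filter_card {E F : Type*} [Fintype E] [Fintype F]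
    (q : E ⊕ F → Prop) [DecidablePred q] :
    ((univ : Finset (E ⊕ F)).filter q).card
      = ((univ : Finset E).filter fun e => q (.inl e)).card
        + ((univ : Finset F).filter fun f => q (.inr f)).card := by
  classical
  rw [← Fintype.card_subtype, ← Fintype.card_subtype, ← Fintype.card_subtype,
    ← Fintype.card_sum]
  exact Fintype.card_congr Equiv.subtypeSum

/-- A bipartite multigraph with maximum degree at most `k` has a proper `k`-edge-coloring. -/
lemma keyK {W E : Type*} [Fintype W] [DecidableEq W] [Fintype E] [DecidableEq E]
    (a b : E → W) (k : ℕ)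
    (ha : ∀ w, (univ.filter fun e => a e = w).card ≤ k)
    (hb : ∀ w, (univ.filter fun e => b e = w).card ≤ k) :
    ∃ c : E → Fin k, IsProp a c ∧ IsProp b c := by
  classical
  have hsumA : ∑ w, (univ.filter fun e => a e = w).card = Fintype.card E := by
    rw [← Finset.card_univ,
      Finset.card_eq_sum_card_fiberwise (f := a) (t := univ) (fun e _ => mem_univ (a e))]
  have hsumB : ∑ w, (univ.filter fun e => b e = w).card = Fintype.card E := by
    rw [← Finset.card_univ,
      Finset.card_eq_sum_card_fiberwise (f := b) (t := univ) (fun e _ => mem_univ (b e))]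
  set N := k * Fintype.card W - Fintype.card E with hN
  have hle : Fintype.card E ≤ k * Fintype.card W := by
    calc Fintype.card E = ∑ w, (univ.filter fun e => a e = w).card := hsumA.symm
      _ ≤ ∑ _w : W, k := Finset.sum_le_sum (fun w _ => ha w)
      _ = k * Fintype.card W := by rw [Finset.sum_const, smul_eq_mul, Finset.card_univ, mul_comm]
  have hdefA : ∑ w, (k - (univ.filter fun e => a e = w).card) = N := by
    have : ∀ w : W, (k - (univ.filter fun e => a e = w).card)
        + (univ.filter fun e => a e = w).card = k := fun w => Nat.sub_add_cancel (ha w)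
    have hsum2 := Finset.sum_congr rfl (fun w (_ : w ∈ (univ : Finset W)) => (this w).symm)
    rw [Finset.sum_add_distrib, hsumA] at hsum2
    simp only [Finset.sum_const, smul_eq_mul, Finset.card_univ, mul_comm] at hsum2
    omega
  have hdefB : ∑ w, (k - (univ.filter fun e => b e = w).card) = N := by
    have : ∀ w : W, (k - (univ.filter fun e => b e = w).card)
        + (univ.filter fun e => b e = w).card = k := fun w => Nat.sub_add_cancel (hb w)
    have hsum2 := Finset.sum_congr rfl (fun w (_ : w ∈ (univ : Finset W)) => (this w).symm)
    rw [Finset.sum_add_distrib, hsumB] at hsum2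
    simp only [Finset.sum_const, smul_eq_mul, Finset.card_univ, mul_comm] at hsum2
    omega
  obtain ⟨fA, hfA⟩ := exists_fiber_fun _ N hdefA
  obtain ⟨fB, hfB⟩ := exists_fiber_fun _ N hdefB
  set a' : E ⊕ Fin N → W := Sum.elim a fA with ha'
  set b' : E ⊕ Fin N → W := Sum.elim b fB with hb'
  have hA' : ∀ w, ((univ : Finset (E ⊕ Fin N)).filter fun x => a' x = w).card = k := by
    intro w
    rw [sum_type_filter_card]
    simp only [ha', Sum.elim_inl, Sum.elim_inr]
    rw [hfA w]
    exact Nat.add_sub_cancel' (ha w)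
  have hB' : ∀ w, ((univ : Finset (E ⊕ Fin N)).filter fun x => b' x = w).card = k := by
    intro w
    rw [sum_type_filter_card]
    simp only [hb', Sum.elim_inl, Sum.elim_inr]
    rw [hfB w]
    exact Nat.add_sub_cancel' (hb w)
  obtain ⟨c'', hc''a, hc''b⟩ := keyReg k a' b' hA' hB'
  refine ⟨fun e => c'' (.inl e), ?_, ?_⟩
  · intro e e' hae hce
    have := hc''a (.inl e) (.inl e') (by simpa [ha'] using hae) hce
    exact Sum.inl_injective this
  · intro e e' hbe hce
    have := hc''b (.inl e) (.inl e') (by simpa [hb'] using hbe) hce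
    exact Sum.inl_injective this

end KeyK

section SideBound

variable {E V : Type*} [Fintype E] [LinearOrder E] [DecidableEq V]

lemma side_bound {k : ℕ} (hk : 0 < k) (p : E → V) (c : E → Fin k)
    (hp : ∀ e e', p e = p e' → blkIdx p k e = blkIdx p k e' → c e = c e' → e = e')
    (v : V) (i : Fin k) :
    (univ.filter fun e => p e = v).card / k ≤ (univ.filter fun e => p e = v ∧ c e = i).card ∧
    (univ.filter fun e => p e = v ∧ c e = i).card
      ≤ ((univ.filter fun e => p e = v).card + k - 1) / k := by
  classical
  set s := univ.filter fun e => p e = v with hs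
  set d := s.card with hd
  have hsplit : (univ.filter fun e => p e = v ∧ c e = i) = s.filter fun e => c e = i := by
    rw [hs, filter_filter]
  have hrnklt : ∀ e ∈ s, blkIdx p k e < d / k + 1 := by
    intro e he
    have hpe : p e = v := (mem_filter.mp he).2
    have h1 : blkIdx p k e = rnk s e / k := by rw [blkIdx, hpe, ← hs]
    have h2 : rnk s e < d := rnk_lt he
    rw [h1]
    have := Nat.div_le_div_right (c := k) (Nat.le_of_lt_succ (Nat.lt_succ_of_lt h2))
    -- rnk s e ≤ d - 1 ... just bound directly
    have h3 : rnk s e / k ≤ (d - 1) / k := Nat.div_le_div_right (by omega)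
    have h4 : (d - 1) / k ≤ d / k := Nat.div_le_div_right (by omega)
    omega
  rcases Nat.eq_zero_or_pos d with hd0 | hdpos
  · have hsub : (univ.filter fun e => p e = v ∧ c e = i) ⊆ s := by
      rw [hsplit]; exact filter_subset _ _
    have h0 : (univ.filter fun e => p e = v ∧ c e = i).card = 0 := by
      have := Finset.card_le_card hsub
      omega
    rw [h0]
    constructor
    · simp [hd0]
    · exact Nat.zero_le _
  · -- number of blocks bound
    set B := (d - 1) / k + 1 with hB
    have hBeq : B = (d + k - 1) / k := by
      have h2 : d - 1 + k = d + k - 1 := by omega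
      have h3 := Nat.add_div_right (d - 1) hk
      rw [h2] at h3
      omega
    have hmem : ∀ e ∈ s.filter (fun e => c e = i), blkIdx p k e ∈ range B := by
      intro e he
      have he' : e ∈ s := (mem_filter.mp he).1
      have hpe : p e = v := (mem_filter.mp he').2
      have h1 : blkIdx p k e = rnk s e / k := by rw [blkIdx, hpe, ← hs]
      have h2 : rnk s e < d := rnk_lt he'
      rw [mem_range, hB, h1]
      have h3 : rnk s e / k ≤ (d - 1) / k := Nat.div_le_div_right (by omega)
      omega
    have hsum := Finset.card_eq_sum_card_fiberwise hmem
    rw [hsplit, hsum]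
    have hterm_le : ∀ j ∈ range B,
        ((s.filter fun e => c e = i).filter fun e => blkIdx p k e = j).card ≤ 1 := by
      intro j _
      rw [Finset.card_le_one]
      intro e he e' he'
      simp only [hs, mem_filter, mem_univ, true_and] at he he'
      obtain ⟨⟨hpe, hce⟩, hbe⟩ := he
      obtain ⟨⟨hpe', hce'⟩, hbe'⟩ := he'
      exact hp e e' (hpe.trans hpe'.symm) (hbe.trans hbe'.symm) (hce.trans hce'.symm)
    have hdkB : d / k ≤ B := by
      have h1 : d / k ≤ (d - 1 + k) / k := Nat.div_le_div_right (by omega)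
      rw [Nat.add_div_right _ hk] at h1
      omega
    constructor
    · -- lower bound
      have hfull : ∀ j ∈ range (d / k),
          1 ≤ ((s.filter fun e => c e = i).filter fun e => blkIdx p k e = j).card := by
        intro j hj
        rw [mem_range] at hj
        have hj' : j < (univ.filter fun e => p e = v).card / k := by
          rw [← hs, ← hd]; exact hj
        have hTcard := blk_fiber_card_eq (p := p) hk hj'
        rw [← hs] at hTcard
        have hinj : Set.InjOn c ↑(s.filter fun e => blkIdx p k e = j) := by
          intro e he e' he' hce
          rw [Finset.mem_coe, mem_filter] at he he'
          have hpe : p e = v := by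
            have := he.1; rw [hs, mem_filter] at this; exact this.2
          have hpe' : p e' = v := by
            have := he'.1; rw [hs, mem_filter] at this; exact this.2
          exact hp e e' (hpe.trans hpe'.symm) (he.2.trans he'.2.symm) hce
        have himgcard : ((s.filter fun e => blkIdx p k e = j).image c).card = k := by
          rw [Finset.card_image_of_injOn hinj, hTcard]
        have himg : (s.filter fun e => blkIdx p k e = j).image c = univ :=
          Finset.eq_univ_of_card _ (by rw [himgcard, Fintype.card_fin])
        have hiin : i ∈ (s.filter fun e => blkIdx p k e = j).image c := by
          rw [himg]; exact mem_univ i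
        obtain ⟨e, heT, hcei⟩ := Finset.mem_image.mp hiin
        have hein : e ∈ (s.filter fun e => c e = i).filter fun e => blkIdx p k e = j := by
          rw [mem_filter] at heT ⊢
          exact ⟨mem_filter.mpr ⟨heT.1, hcei⟩, heT.2⟩
        exact Finset.card_pos.mpr ⟨e, hein⟩
      calc d / k = ∑ _j ∈ range (d / k), 1 := by simp
        _ ≤ ∑ j ∈ range (d / k),
              ((s.filter fun e => c e = i).filter fun e => blkIdx p k e = j).card :=
            Finset.sum_le_sum hfull
        _ ≤ ∑ j ∈ range B,
              ((s.filter fun e => c e = i).filter fun e => blkIdx p k e = j).card :=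
            Finset.sum_le_sum_of_subset (Finset.range_subset_range.mpr hdkB)
    · -- upper bound
      calc ∑ j ∈ range B,
            ((s.filter fun e => c e = i).filter fun e => blkIdx p k e = j).card
          ≤ ∑ _j ∈ range B, 1 := Finset.sum_le_sum hterm_le
        _ = B := by simp
        _ = (d + k - 1) / k := hBeq

end SideBound

section Equitable

/-- The equitable edge-coloring theorem for abstract bipartite multigraphs:
`a e` and `b e` are the two endpoints of the edge `e`. -/
lemma equitable {E V : Type*} [Fintype E] [Fintype V] [DecidableEq V]
    (a b : E → V) (k : ℕ) (hk : 0 < k) :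
    ∃ c : E → Fin k, ∀ v (i : Fin k),
      ((univ.filter fun e => a e = v).card / k
          ≤ (univ.filter fun e => a e = v ∧ c e = i).card
        ∧ (univ.filter fun e => a e = v ∧ c e = i).card
          ≤ ((univ.filter fun e => a e = v).card + k - 1) / k)
      ∧ ((univ.filter fun e => b e = v).card / k
          ≤ (univ.filter fun e => b e = v ∧ c e = i).card
        ∧ (univ.filter fun e => b e = v ∧ c e = i).card
          ≤ ((univ.filter fun e => b e = v).card + k - 1) / k) := by
  classical
  letI : LinearOrder E := LinearOrder.lift' (fun e => (Fintype.equivFin E) e)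
    (Equiv.injective _)
  set A : E → V × Fin (Fintype.card E + 1) :=
    fun e => (a e, ⟨blkIdx a k e, Nat.lt_succ_of_le (blkIdx_le_cardE a k e)⟩) with hA
  set Bf : E → V × Fin (Fintype.card E + 1) :=
    fun e => (b e, ⟨blkIdx b k e, Nat.lt_succ_of_le (blkIdx_le_cardE b k e)⟩) with hBf
  have hAk : ∀ w, (univ.filter fun e => A e = w).card ≤ k := by
    rintro ⟨v, j⟩
    have hfe : (univ.filter fun e => A e = (v, j))
        = univ.filter fun e => a e = v ∧ blkIdx a k e = (j : ℕ) := by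
      apply Finset.filter_congr
      intro e _
      simp [hA, Prod.ext_iff, Fin.ext_iff]
    rw [hfe, ← filter_filter]
    exact blk_fiber_card_le hk _
  have hBk : ∀ w, (univ.filter fun e => Bf e = w).card ≤ k := by
    rintro ⟨v, j⟩
    have hfe : (univ.filter fun e => Bf e = (v, j))
        = univ.filter fun e => b e = v ∧ blkIdx b k e = (j : ℕ) := by
      apply Finset.filter_congr
      intro e _
      simp [hBf, Prod.ext_iff, Fin.ext_iff]
    rw [hfe, ← filter_filter]
    exact blk_fiber_card_le hk _
  obtain ⟨c, hca, hcb⟩ := keyK A Bf k hAk hBk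
  have hpa : ∀ e e', a e = a e' → blkIdx a k e = blkIdx a k e' → c e = c e' → e = e' := by
    intro e e' h1 h2 h3
    refine hca e e' ?_ h3
    simp [hA, Prod.ext_iff, Fin.ext_iff, h1, h2]
  have hpb : ∀ e e', b e = b e' → blkIdx b k e = blkIdx b k e' → c e = c e' → e = e' := by
    intro e e' h1 h2 h3
    refine hcb e e' ?_ h3
    simp [hBf, Prod.ext_iff, Fin.ext_iff, h1, h2]
  exact ⟨c, fun v i => ⟨side_bound hk a c hpa v i, side_bound hk b c hpb v i⟩⟩

end Equitable

section RealBound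

lemma real_bound {d cnt k : ℕ} (hk : 0 < k) (h1 : d / k ≤ cnt) (h2 : cnt ≤ (d + k - 1) / k) :
    |(cnt : ℝ) - (d : ℝ) / (k : ℝ)| < 1 := by
  have hk' : (0 : ℝ) < (k : ℝ) := by exact_mod_cast hk
  have hnat1 : d < k * (d / k) + k := by
    have ha := Nat.div_add_mod d k
    have hb := Nat.mod_lt d hk
    linarith
  have hnat2 : cnt * k ≤ d + k - 1 := by
    calc cnt * k ≤ ((d + k - 1) / k) * k := Nat.mul_le_mul_right k h2
      _ ≤ d + k - 1 := Nat.div_mul_le_self _ _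
  have hnat3 : cnt * k < d + k := by
    have hdk : d + k - 1 < d + k := by omega
    exact lt_of_le_of_lt hnat2 hdk
  rw [abs_lt]
  constructor
  · have hr : (d : ℝ) < ((cnt : ℝ) + 1) * k := by
      have hn : d < (cnt + 1) * k := by
        have hm : k * (d / k) ≤ k * cnt := Nat.mul_le_mul_left k h1
        calc d < k * (d / k) + k := hnat1
          _ ≤ k * cnt + k := Nat.add_le_add_right hm k
          _ = (cnt + 1) * k := by ring
      exact_mod_cast hn
    have := (div_lt_iff₀ hk').mpr hr
    linarith
  · have hr : (cnt : ℝ) * k < (d : ℝ) + k := by exact_mod_cast hnat3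
    have h3 : (cnt : ℝ) < ((d : ℝ) + k) / k := (lt_div_iff₀ hk').mpr hr
    have h4 : ((d : ℝ) + k) / k = (d : ℝ) / k + 1 := by field_simp
    linarith

end RealBound

section Mdeg

lemma mdeg_eqA {V E : Type*} [DecidableEq V] [DecidableEq E] (ends : E → V × V) (A : Finset V)
    (hA : ∀ e : E,
      ((ends e).1 ∈ A ∧ (ends e).2 ∉ A) ∨ ((ends e).1 ∉ A ∧ (ends e).2 ∈ A))
    (a : E → V) (haa : ∀ e, a e = if (ends e).1 ∈ A then (ends e).1 else (ends e).2)
    (S : Finset E) {v : V} (hv : v ∈ A) :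
    mdeg ends S v = (S.filter fun e => a e = v).card := by
  have hu : S.filter (fun e => a e = v)
      = S.filter (fun e => (ends e).1 = v) ∪ S.filter (fun e => (ends e).2 = v) := by
    ext e
    simp only [mem_filter, mem_union]
    rcases hA e with ⟨h1, h2⟩ | ⟨h1, h2⟩
    · rw [haa e, if_pos h1]
      constructor
      · rintro ⟨hS, hveq⟩; exact Or.inl ⟨hS, hveq⟩
      · rintro (⟨hS, hveq⟩ | ⟨hS, hveq⟩)
        · exact ⟨hS, hveq⟩
        · exact absurd (by rw [hveq]; exact hv) h2
    · rw [haa e, if_neg h1]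
      constructor
      · rintro ⟨hS, hveq⟩; exact Or.inr ⟨hS, hveq⟩
      · rintro (⟨hS, hveq⟩ | ⟨hS, hveq⟩)
        · exact absurd (by rw [hveq]; exact hv) h1
        · exact ⟨hS, hveq⟩
  have hdisj : Disjoint (S.filter fun e => (ends e).1 = v)
      (S.filter fun e => (ends e).2 = v) := by
    rw [Finset.disjoint_left]
    intro e he1 he2
    rcases hA e with ⟨h1, h2⟩ | ⟨h1, h2⟩
    · exact h2 (by rw [(mem_filter.mp he2).2]; exact hv)
    · exact h1 (by rw [(mem_filter.mp he1).2]; exact hv)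
  rw [mdeg, hu, Finset.card_union_of_disjoint hdisj]

lemma mdeg_eqB {V E : Type*} [DecidableEq V] [DecidableEq E] (ends : E → V × V) (A : Finset V)
    (hA : ∀ e : E,
      ((ends e).1 ∈ A ∧ (ends e).2 ∉ A) ∨ ((ends e).1 ∉ A ∧ (ends e).2 ∈ A))
    (b : E → V) (hbb : ∀ e, b e = if (ends e).1 ∈ A then (ends e).2 else (ends e).1)
    (S : Finset E) {v : V} (hv : v ∉ A) :
    mdeg ends S v = (S.filter fun e => b e = v).card := by
  have hu : S.filter (fun e => b e = v)
      = S.filter (fun e => (ends e).1 = v) ∪ S.filter (fun e => (ends e).2 = v) := by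
    ext e
    simp only [mem_filter, mem_union]
    rcases hA e with ⟨h1, h2⟩ | ⟨h1, h2⟩
    · rw [hbb e, if_pos h1]
      constructor
      · rintro ⟨hS, hveq⟩; exact Or.inr ⟨hS, hveq⟩
      · rintro (⟨hS, hveq⟩ | ⟨hS, hveq⟩)
        · exact absurd (by rw [← hveq]; exact h1) hv
        · exact ⟨hS, hveq⟩
    · rw [hbb e, if_neg h1]
      constructor
      · rintro ⟨hS, hveq⟩; exact Or.inl ⟨hS, hveq⟩
      · rintro (⟨hS, hveq⟩ | ⟨hS, hveq⟩)
        · exact ⟨hS, hveq⟩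
        · exact absurd (by rw [← hveq]; exact h2) hv
  have hdisj : Disjoint (S.filter fun e => (ends e).1 = v)
      (S.filter fun e => (ends e).2 = v) := by
    rw [Finset.disjoint_left]
    intro e he1 he2
    rcases hA e with ⟨h1, h2⟩ | ⟨h1, h2⟩
    · exact hv (by rw [← (mem_filter.mp he1).2]; exact h1)
    · exact hv (by rw [← (mem_filter.mp he2).2]; exact h2)
  rw [mdeg, hu, Finset.card_union_of_disjoint hdisj]

end Mdeg

/-- de Werra's theorem: every bipartite multigraph has an equitable edge-decomposition
into `k` factors. -/
theorem deWerra_equitable_factorization [Fintype V] [Fintype E] [DecidableEq V]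
    (ends : E → V × V)
    (hbip : ∃ A : Finset V, ∀ e : E,
      ((ends e).1 ∈ A ∧ (ends e).2 ∉ A) ∨ ((ends e).1 ∉ A ∧ (ends e).2 ∈ A))
    (k : ℕ) (hk : 0 < k) :
    ∃ c : E → Fin k, ∀ v : V, ∀ i : Fin k,
      |((mdeg ends (univ.filter fun e => c e = i) v : ℝ)) -
        (mdeg ends univ v : ℝ) / (k : ℝ)| < 1 := by
  classical
  obtain ⟨A, hA⟩ := hbip
  obtain ⟨c, hc⟩ := equitable (fun e => if (ends e).1 ∈ A then (ends e).1 else (ends e).2)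
    (fun e => if (ends e).1 ∈ A then (ends e).2 else (ends e).1) k hk
  refine ⟨c, fun v i => ?_⟩
  by_cases hv : v ∈ A
  · have hm1 : mdeg ends (univ.filter fun e => c e = i) v
        = (univ.filter fun e =>
            (if (ends e).1 ∈ A then (ends e).1 else (ends e).2) = v ∧ c e = i).card := by
      rw [mdeg_eqA ends A hA _ (fun e => rfl) _ hv, filter_filter]
      congr 1
      apply Finset.filter_congr
      intro e _
      exact and_comm
    have hm2 : mdeg ends univ v
        = (univ.filter fun e =>
            (if (ends e).1 ∈ A then (ends e).1 else (ends e).2) = v).card :=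
      mdeg_eqA ends A hA _ (fun e => rfl) _ hv
    rw [hm1, hm2]
    exact real_bound hk ((hc v i).1).1 ((hc v i).1).2
  · have hm1 : mdeg ends (univ.filter fun e => c e = i) v
        = (univ.filter fun e =>
            (if (ends e).1 ∈ A then (ends e).2 else (ends e).1) = v ∧ c e = i).card := by
      rw [mdeg_eqB ends A hA _ (fun e => rfl) _ hv, filter_filter]
      congr 1
      apply Finset.filter_congr
      intro e _
      exact and_comm
    have hm2 : mdeg ends univ v
        = (univ.filter fun e =>
            (if (ends e).1 ∈ A then (ends e).2 else (ends e).1) = v).card :=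
      mdeg_eqB ends A hA _ (fun e => rfl) _ hv
    rw [hm1, hm2]
    exact real_bound hk ((hc v i).2).1 ((hc v i).2).2
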